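/- Let M ≥ 2, 1 ≤ i < j ≤ M, and let f, g be probability densities on ℝ^M with zero first moments and finite second moments. Then d_2(R^S_{i,j} f, R^S_{i,j} g) ≤ d_2(f, g). -/

import Mathlib

open MeasureTheory Real Filter

noncomputable section

def gaussDensity {k : ℕ} (x : Fin k → ℝ) : ℝ := ∏ i, Real.exp (-Real.pi * (x i) ^ 2)
def gaussDensityP {m n : ℕ} (p : (Fin m → ℝ) × (Fin n → ℝ)) : ℝ :=
  gaussDensity p.1 * gaussDensity p.2

/-- Fourier transform `f̂(ζ) = ∫ e^{-2πi ζ·x} f(x) dx` of a density on `ℝ^k`. -/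
def fourierT {k : ℕ} (f : (Fin k → ℝ) → ℝ) (ζ : Fin k → ℝ) : ℂ :=
  ∫ x : Fin k → ℝ, Complex.exp (-2 * Real.pi * Complex.I * ((∑ i, ζ i * x i : ℝ) : ℂ)) * (f x : ℂ)

/-- Fourier transform of a density on `ℝ^m × ℝ^n`. -/
def fourierTP {m n : ℕ} (f : (Fin m → ℝ) × (Fin n → ℝ) → ℝ)
    (ζ : (Fin m → ℝ) × (Fin n → ℝ)) : ℂ :=
  ∫ p : (Fin m → ℝ) × (Fin n → ℝ),
    Complex.exp (-2 * Real.pi * Complex.I *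
      ((∑ i, ζ.1 i * p.1 i + ∑ j, ζ.2 j * p.2 j : ℝ) : ℂ)) * (f p : ℂ)

/-- Gabetta–Toscani–Wennberg distance `d₂(f,g) = sup_{ζ≠0} |f̂(ζ)-ĝ(ζ)|/|ζ|²` on `ℝ^k`. -/
def d2 {k : ℕ} (f g : (Fin k → ℝ) → ℝ) : ℝ :=
  ⨆ ζ : {ζ : Fin k → ℝ // ζ ≠ 0},
    ‖fourierT f ζ.1 - fourierT g ζ.1‖ / (∑ i, (ζ.1 i) ^ 2)

/-- Gabetta–Toscani–Wennberg distance on `ℝ^m × ℝ^n`. -/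
def d2P {m n : ℕ} (f g : (Fin m → ℝ) × (Fin n → ℝ) → ℝ) : ℝ :=
  ⨆ ζ : {ζ : (Fin m → ℝ) × (Fin n → ℝ) // ζ ≠ 0},
    ‖fourierTP f ζ.1 - fourierTP g ζ.1‖ /
      (∑ i, (ζ.1.1 i) ^ 2 + ∑ j, (ζ.1.2 j) ^ 2)

/-- `f` is a probability density on `ℝ^k`. -/
def IsProbDensity {k : ℕ} (f : (Fin k → ℝ) → ℝ) : Prop :=
  (∀ x, 0 ≤ f x) ∧ Integrable f ∧ ∫ x, f x = 1

/-- `f` has zero first moments and finite second moments. -/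
def ZeroFirstFiniteSecond {k : ℕ} (f : (Fin k → ℝ) → ℝ) : Prop :=
  (∀ i, Integrable (fun x => x i * f x) ∧ ∫ x, x i * f x = 0) ∧
    ∀ i, Integrable fun x => (x i) ^ 2 * f x

/-- `f` is a probability density on `ℝ^m × ℝ^n`. -/
def IsProbDensityP {m n : ℕ} (f : (Fin m → ℝ) × (Fin n → ℝ) → ℝ) : Prop :=
  (∀ p, 0 ≤ f p) ∧ Integrable f ∧ ∫ p, f p = 1

/-- zero first moments and finite second moments, product-space version. -/
def ZeroFirstFiniteSecondP {m n : ℕ} (f : (Fin m → ℝ) × (Fin n → ℝ) → ℝ) : Prop :=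
  ((∀ i, Integrable (fun p => p.1 i * f p) ∧ ∫ p, p.1 i * f p = 0) ∧
    (∀ j, Integrable (fun p => p.2 j * f p) ∧ ∫ p, p.2 j * f p = 0)) ∧
  ((∀ i, Integrable fun p => (p.1 i) ^ 2 * f p) ∧
    (∀ j, Integrable fun p => (p.2 j) ^ 2 * f p))

def circAvg (g : ℝ → ℝ) : ℝ := (1 / (2 * Real.pi)) * ∫ θ in (0:ℝ)..(2 * Real.pi), g θ

def pairRot {k : ℕ} (v : Fin k → ℝ) (i j : Fin k) (θ : ℝ) : Fin k → ℝ :=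
  fun l => if l = i then v i * Real.cos θ + v j * Real.sin θ
    else if l = j then -(v i) * Real.sin θ + v j * Real.cos θ else v l

/-- Kac collision operator `R^S_{i,j}` on densities on `ℝ^m`. -/
def RS1 {m : ℕ} (i j : Fin m) (f : (Fin m → ℝ) → ℝ) (v : Fin m → ℝ) : ℝ :=
  circAvg fun θ => f (pairRot v i j θ)

section Aux

variable {M : ℕ}

lemma pairRot_fst (v : Fin M → ℝ) (i j : Fin M) (θ : ℝ) :
    pairRot v i j θ i = v i * Real.cos θ + v j * Real.sin θ := by simp [pairRot]

lemma pairRot_snd {i j : Fin M} (hji : j ≠ i) (v : Fin M → ℝ) (θ : ℝ) :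
    pairRot v i j θ j = -(v i) * Real.sin θ + v j * Real.cos θ := by simp [pairRot, hji]

lemma pairRot_other (v : Fin M → ℝ) {i j l : Fin M} (h1 : l ≠ i) (h2 : l ≠ j) (θ : ℝ) :
    pairRot v i j θ l = v l := by simp [pairRot, h1, h2]

lemma pairRot_pairRot {i j : Fin M} (hij : i ≠ j) (v : Fin M → ℝ) (θ θ' : ℝ) :
    pairRot (pairRot v i j θ') i j θ = pairRot v i j (θ + θ') := by
  funext l
  by_cases h1 : l = i
  · subst h1
    simp only [pairRot_fst, pairRot_snd hij.symm, Real.cos_add, Real.sin_add]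
    ring
  · by_cases h2 : l = j
    · subst h2
      simp only [pairRot_fst, pairRot_snd hij.symm, Real.cos_add, Real.sin_add]
      ring
    · rw [pairRot_other _ h1 h2, pairRot_other _ h1 h2, pairRot_other _ h1 h2]

lemma pairRot_zero {i j : Fin M} (hij : i ≠ j) (v : Fin M → ℝ) :
    pairRot v i j 0 = v := by
  funext l
  by_cases h1 : l = i
  · subst h1; simp [pairRot_fst]
  · by_cases h2 : l = j
    · subst h2; simp [pairRot_snd hij.symm]
    · rw [pairRot_other _ h1 h2]

lemma sum_split (i j : Fin M) (hij : i ≠ j) (A : Fin M → ℝ) :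
    ∑ l, A l = A i + A j + ∑ l ∈ (Finset.univ.erase i).erase j, A l := by
  rw [← Finset.add_sum_erase _ A (Finset.mem_univ i),
    ← Finset.add_sum_erase _ A (Finset.mem_erase.2 ⟨hij.symm, Finset.mem_univ j⟩), ← add_assoc]

lemma sum_mul_pairRot {i j : Fin M} (hij : i ≠ j) (ζ v : Fin M → ℝ) (θ : ℝ) :
    ∑ l, ζ l * pairRot v i j θ l = ∑ l, pairRot ζ i j (-θ) l * v l := by
  rw [sum_split i j hij fun l => ζ l * pairRot v i j θ l,
    sum_split i j hij fun l => pairRot ζ i j (-θ) l * v l]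
  have hS : ∑ l ∈ (Finset.univ.erase i).erase j, ζ l * pairRot v i j θ l
      = ∑ l ∈ (Finset.univ.erase i).erase j, pairRot ζ i j (-θ) l * v l := by
    refine Finset.sum_congr rfl fun l hl => ?_
    obtain ⟨h2, hl'⟩ := Finset.mem_erase.1 hl
    obtain ⟨h1, -⟩ := Finset.mem_erase.1 hl'
    rw [pairRot_other _ h1 h2, pairRot_other _ h1 h2]
  rw [hS, pairRot_fst, pairRot_snd hij.symm, pairRot_fst, pairRot_snd hij.symm,
    Real.cos_neg, Real.sin_neg]
  ring

lemma sum_sq_pairRot {i j : Fin M} (hij : i ≠ j) (ζ : Fin M → ℝ) (θ : ℝ) :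
    ∑ l, pairRot ζ i j θ l ^ 2 = ∑ l, ζ l ^ 2 := by
  rw [sum_split i j hij fun l => pairRot ζ i j θ l ^ 2, sum_split i j hij fun l => ζ l ^ 2]
  have hS : ∑ l ∈ (Finset.univ.erase i).erase j, pairRot ζ i j θ l ^ 2
      = ∑ l ∈ (Finset.univ.erase i).erase j, ζ l ^ 2 := by
    refine Finset.sum_congr rfl fun l hl => ?_
    obtain ⟨h2, hl'⟩ := Finset.mem_erase.1 hl
    obtain ⟨h1, -⟩ := Finset.mem_erase.1 hl'
    rw [pairRot_other _ h1 h2]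
  rw [hS, pairRot_fst, pairRot_snd hij.symm]
  linear_combination (ζ i ^ 2 + ζ j ^ 2) * Real.sin_sq_add_cos_sq θ

lemma sum_sq_pos {ζ : Fin M → ℝ} (hζ : ζ ≠ 0) : 0 < ∑ l, ζ l ^ 2 := by
  have h : ∃ l, ζ l ≠ 0 := by
    by_contra h; push_neg at h; exact hζ (funext h)
  obtain ⟨l, hl⟩ := h
  exact Finset.sum_pos' (fun _ _ => sq_nonneg _) ⟨l, Finset.mem_univ l, by positivity⟩

lemma pairRot_ne_zero {i j : Fin M} (hij : i ≠ j) {ζ : Fin M → ℝ} (hζ : ζ ≠ 0) (θ : ℝ) :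
    pairRot ζ i j θ ≠ 0 := by
  intro h
  have h0 : ∑ l, pairRot ζ i j θ l ^ 2 = 0 := by rw [h]; simp
  rw [sum_sq_pairRot hij] at h0
  exact absurd h0 (ne_of_gt (sum_sq_pos hζ))

lemma continuous_pairRot (i j : Fin M) :
    Continuous fun p : ℝ × (Fin M → ℝ) => pairRot p.2 i j p.1 := by
  refine continuous_pi fun l => ?_
  unfold pairRot
  by_cases h1 : l = i
  · simp only [if_pos h1]; fun_prop
  · simp only [if_neg h1]
    by_cases h2 : l = j
    · simp only [if_pos h2]; fun_prop
    · simp only [if_neg h2]; fun_prop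

lemma continuous_pairRot' (i j : Fin M) (θ : ℝ) :
    Continuous fun v : Fin M → ℝ => pairRot v i j θ :=
  (continuous_pairRot i j).comp (Continuous.prodMk_right θ)

def pairRotL (i j : Fin M) (θ : ℝ) : (Fin M → ℝ) →ₗ[ℝ] (Fin M → ℝ) where
  toFun v := pairRot v i j θ
  map_add' u v := by
    funext l; simp only [pairRot, Pi.add_apply]; split_ifs <;> ring
  map_smul' c v := by
    funext l
    simp only [pairRot, Pi.smul_apply, smul_eq_mul, RingHom.id_apply]
    split_ifs <;> ring

def negJL (j : Fin M) : (Fin M → ℝ) →ₗ[ℝ] (Fin M → ℝ) where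
  toFun v := fun l => if l = j then -(v l) else v l
  map_add' u v := by funext l; simp only [Pi.add_apply]; split_ifs <;> ring
  map_smul' c v := by
    funext l; simp only [Pi.smul_apply, smul_eq_mul, RingHom.id_apply]
    split_ifs <;> ring

lemma pairRotL_comp {i j : Fin M} (hij : i ≠ j) (θ θ' : ℝ) :
    (pairRotL i j θ).comp (pairRotL i j θ') = pairRotL i j (θ + θ') :=
  LinearMap.ext fun v => pairRot_pairRot hij v θ θ'

lemma pairRotL_zero {i j : Fin M} (hij : i ≠ j) :
    pairRotL i j 0 = LinearMap.id :=
  LinearMap.ext fun v => pairRot_zero hij v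

lemma negJL_comp_self (j : Fin M) : (negJL j).comp (negJL j) = LinearMap.id := by
  refine LinearMap.ext fun v => ?_
  funext l
  simp only [negJL, LinearMap.comp_apply, LinearMap.coe_mk, AddHom.coe_mk, LinearMap.id_apply]
  split_ifs <;> ring

lemma negJL_conj {i j : Fin M} (hij : i ≠ j) (θ : ℝ) :
    (negJL j).comp ((pairRotL i j θ).comp (negJL j)) = pairRotL i j (-θ) := by
  refine LinearMap.ext fun v => funext fun l => ?_
  simp only [LinearMap.comp_apply, negJL, pairRotL, LinearMap.coe_mk, AddHom.coe_mk, pairRot]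
  by_cases h1 : l = i <;> by_cases h2 : l = j <;>
    simp only [h1, h2, if_pos, if_neg, hij, hij.symm, if_true, if_false, ite_true, ite_false,
      Real.cos_neg, Real.sin_neg, reduceIte] <;>
    first
      | (rw [if_neg hij, if_neg hij.symm]; ring)
      | (try rw [if_neg hij]) <;> (try rw [if_neg hij.symm]) <;> ring

lemma abs_det_pairRotL {i j : Fin M} (hij : i ≠ j) (θ : ℝ) :
    |LinearMap.det (pairRotL i j θ)| = 1 := by
  have h1 : LinearMap.det (pairRotL i j θ) * LinearMap.det (pairRotL i j (-θ)) = 1 := by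
    rw [← LinearMap.det_comp, pairRotL_comp hij, add_neg_cancel, pairRotL_zero hij,
      LinearMap.det_id]
  have h2 : LinearMap.det (negJL j) * LinearMap.det (negJL j) = 1 := by
    rw [← LinearMap.det_comp, negJL_comp_self, LinearMap.det_id]
  have h3 : LinearMap.det (pairRotL i j (-θ)) = LinearMap.det (pairRotL i j θ) := by
    rw [← negJL_conj hij θ, LinearMap.det_comp, LinearMap.det_comp]
    calc LinearMap.det (negJL j) * (LinearMap.det (pairRotL i j θ) * LinearMap.det (negJL j))
        = LinearMap.det (pairRotL i j θ) * (LinearMap.det (negJL j) * LinearMap.det (negJL j)) := by ring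
      _ = LinearMap.det (pairRotL i j θ) := by rw [h2, mul_one]
  rw [h3] at h1
  nlinarith [abs_nonneg (LinearMap.det (pairRotL i j θ)), sq_abs (LinearMap.det (pairRotL i j θ))]

lemma measurePreserving_pairRot {i j : Fin M} (hij : i ≠ j) (θ : ℝ) :
    MeasurePreserving (fun v : Fin M → ℝ => pairRot v i j θ) volume volume := by
  have hd : |LinearMap.det (pairRotL i j θ)| = 1 := abs_det_pairRotL hij θ
  have hd0 : LinearMap.det (pairRotL i j θ) ≠ 0 := by
    intro h; rw [h] at hd; simp at hd
  refine ⟨(continuous_pairRot' i j θ).measurable, ?_⟩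
  have heq : (fun v : Fin M → ℝ => pairRot v i j θ) = ⇑(pairRotL i j θ) := rfl
  rw [heq, Real.map_linearMap_volume_pi_eq_smul_volume_pi hd0, abs_inv, hd, inv_one,
    ENNReal.ofReal_one, one_smul]

end Aux

section Aux2

variable {M : ℕ}

def eKer (t : ℝ) : ℂ := Complex.exp (-2 * Real.pi * Complex.I * (t : ℂ))

lemma fourierT_eq (f : (Fin M → ℝ) → ℝ) (ζ : Fin M → ℝ) :
    fourierT f ζ = ∫ x : Fin M → ℝ, eKer (∑ l, ζ l * x l) * (f x : ℂ) := rfl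

lemma eKer_abs (t : ℝ) : ‖eKer t‖ = 1 := by
  have h : (-2 * Real.pi * Complex.I * (t : ℂ)) = ((-2 * Real.pi * t : ℝ) : ℂ) * Complex.I := by
    push_cast; ring
  rw [eKer, h, Complex.norm_exp_ofReal_mul_I]

lemma continuous_eKer : Continuous eKer := by
  unfold eKer; fun_prop

def pairRotHomeo {i j : Fin M} (hij : i ≠ j) (θ : ℝ) : (Fin M → ℝ) ≃ₜ (Fin M → ℝ) where
  toFun v := pairRot v i j θ
  invFun v := pairRot v i j (-θ)
  left_inv v := by
    show pairRot (pairRot v i j θ) i j (-θ) = v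
    rw [pairRot_pairRot hij, neg_add_cancel, pairRot_zero hij]
  right_inv v := by
    show pairRot (pairRot v i j (-θ)) i j θ = v
    rw [pairRot_pairRot hij, add_neg_cancel, pairRot_zero hij]
  continuous_toFun := continuous_pairRot' i j θ
  continuous_invFun := continuous_pairRot' i j (-θ)

def pairRotSkew {i j : Fin M} (hij : i ≠ j) : (ℝ × (Fin M → ℝ)) ≃ₜ (ℝ × (Fin M → ℝ)) where
  toFun p := (p.1, pairRot p.2 i j p.1)
  invFun p := (p.1, pairRot p.2 i j (-p.1))
  left_inv p := by
    show (p.1, pairRot (pairRot p.2 i j p.1) i j (-p.1)) = p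
    rw [pairRot_pairRot hij, neg_add_cancel, pairRot_zero hij]
  right_inv p := by
    show (p.1, pairRot (pairRot p.2 i j (-p.1)) i j p.1) = p
    rw [pairRot_pairRot hij, add_neg_cancel, pairRot_zero hij]
  continuous_toFun := continuous_fst.prodMk (continuous_pairRot i j)
  continuous_invFun := by
    refine continuous_fst.prodMk ?_
    exact (continuous_pairRot i j).comp ((continuous_fst.neg).prodMk continuous_snd)

lemma measurePreserving_skew {i j : Fin M} (hij : i ≠ j) :
    MeasurePreserving (fun p : ℝ × (Fin M → ℝ) => (p.1, pairRot p.2 i j p.1))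
      ((volume.restrict (Set.Ioc 0 (2 * Real.pi))).prod volume)
      ((volume.restrict (Set.Ioc 0 (2 * Real.pi))).prod volume) := by
  have h := (MeasurePreserving.id (volume.restrict (Set.Ioc (0:ℝ) (2 * Real.pi)))).skew_product
    (g := fun (a : ℝ) (c : Fin M → ℝ) => pairRot c i j a)
    ((continuous_pairRot i j).measurable)
    (Eventually.of_forall fun θ => (measurePreserving_pairRot hij θ).map_eq)
  exact h

lemma RS_fourier {i j : Fin M} (hij : i ≠ j) {f : (Fin M → ℝ) → ℝ}
    (hf : Integrable f) (ζ : Fin M → ℝ) :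
    fourierT (RS1 i j f) ζ =
      ((1 / (2 * Real.pi) : ℝ) : ℂ) *
        ∫ θ in Set.Ioc 0 (2 * Real.pi), fourierT f (pairRot ζ i j θ) ∧
    IntegrableOn (fun θ => fourierT f (pairRot ζ i j θ)) (Set.Ioc 0 (2 * Real.pi)) := by
  have μθ : Measure ℝ := volume.restrict (Set.Ioc (0:ℝ) (2 * Real.pi))
  haveI hfin : IsFiniteMeasure (volume.restrict (Set.Ioc (0:ℝ) (2 * Real.pi))) := by
    constructor
    rw [Measure.restrict_apply_univ]
    rw [Real.volume_Ioc]
    exact ENNReal.ofReal_lt_top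
  set F : ℝ → (Fin M → ℝ) → ℂ := fun θ x => eKer (∑ l, ζ l * x l) * (f (pairRot x i j θ) : ℂ)
    with hF
  -- joint measurability
  have hfsnd : AEStronglyMeasurable (fun p : ℝ × (Fin M → ℝ) => f p.2) ((volume.restrict (Set.Ioc (0:ℝ) (2 * Real.pi))).prod volume) :=
    hf.aestronglyMeasurable.comp_quasiMeasurePreserving Measure.quasiMeasurePreserving_snd
  have hskew := measurePreserving_skew (M := M) hij
  have hT'emb : MeasurableEmbedding fun p : ℝ × (Fin M → ℝ) => (p.1, pairRot p.2 i j p.1) :=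
    (pairRotSkew hij).toMeasurableEquiv.measurableEmbedding
  have hcomp : AEStronglyMeasurable (fun p : ℝ × (Fin M → ℝ) => f (pairRot p.2 i j p.1))
      ((volume.restrict (Set.Ioc (0:ℝ) (2 * Real.pi))).prod volume) :=
    (hskew.aestronglyMeasurable_comp_iff hT'emb).2 hfsnd
  have hnormInt : Integrable (fun p : ℝ × (Fin M → ℝ) => ‖f p.2‖) ((volume.restrict (Set.Ioc (0:ℝ) (2 * Real.pi))).prod volume) := by
    refine (integrable_prod_iff hfsnd.norm).2 ⟨Eventually.of_forall fun _ => hf.norm, ?_⟩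
    exact integrable_const (∫ x : Fin M → ℝ, ‖‖f x‖‖ ∂volume)
  have hg : Integrable (fun p : ℝ × (Fin M → ℝ) => ‖f (pairRot p.2 i j p.1)‖) ((volume.restrict (Set.Ioc (0:ℝ) (2 * Real.pi))).prod volume) :=
    (hskew.integrable_comp_emb hT'emb).2 hnormInt
  have hFint : Integrable (Function.uncurry F) ((volume.restrict (Set.Ioc (0:ℝ) (2 * Real.pi))).prod volume) := by
    refine hg.mono' ?_ (Eventually.of_forall fun p => ?_)
    · refine AEStronglyMeasurable.mul ?_ ?_
      · exact (continuous_eKer.comp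
          (by fun_prop : Continuous fun p : ℝ × (Fin M → ℝ) => ∑ l, ζ l * p.2 l)).aestronglyMeasurable
      · exact Complex.continuous_ofReal.comp_aestronglyMeasurable hcomp
    · show ‖eKer _ * (f _ : ℂ)‖ ≤ _
      rw [norm_mul, eKer_abs, one_mul,
        ((Complex.norm_real _).trans (Real.norm_eq_abs _))]
      exact le_of_eq rfl
  have hslice : ∀ θ : ℝ, (∫ x, F θ x) = fourierT f (pairRot ζ i j θ) := by
    intro θ
    have hMP := measurePreserving_pairRot (M := M) hij θ
    have hemb : MeasurableEmbedding fun v : Fin M → ℝ => pairRot v i j θ :=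
      (pairRotHomeo hij θ).toMeasurableEquiv.measurableEmbedding
    have key : ∀ x : Fin M → ℝ, F θ x
        = (fun y => eKer (∑ l, pairRot ζ i j θ l * y l) * (f y : ℂ)) (pairRot x i j θ) := by
      intro x
      simp only [hF]
      have : ∑ l, pairRot ζ i j θ l * pairRot x i j θ l = ∑ l, ζ l * x l := by
        rw [sum_mul_pairRot hij (pairRot ζ i j θ) x θ, pairRot_pairRot hij,
          neg_add_cancel, pairRot_zero hij]
      rw [this]
    calc (∫ x, F θ x)
        = ∫ x, (fun y => eKer (∑ l, pairRot ζ i j θ l * y l) * (f y : ℂ)) (pairRot x i j θ) := by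
          exact integral_congr_ae (Eventually.of_forall key)
      _ = ∫ y, eKer (∑ l, pairRot ζ i j θ l * y l) * (f y : ℂ) :=
          hMP.integral_comp hemb fun y => eKer (∑ l, pairRot ζ i j θ l * y l) * (f y : ℂ)
      _ = fourierT f (pairRot ζ i j θ) := (fourierT_eq f _).symm
  constructor
  · have h1 : ∀ x : Fin M → ℝ, ((RS1 i j f x : ℝ) : ℂ)
        = ((1 / (2 * Real.pi) : ℝ) : ℂ) * ∫ θ, (f (pairRot x i j θ) : ℂ) ∂(volume.restrict (Set.Ioc (0:ℝ) (2 * Real.pi))) := by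
      intro x
      calc ((RS1 i j f x : ℝ) : ℂ)
          = ((1 / (2 * Real.pi) : ℝ) : ℂ) *
            ((∫ θ in Set.Ioc (0:ℝ) (2 * Real.pi), f (pairRot x i j θ) : ℝ) : ℂ) := by
            rw [RS1, circAvg, intervalIntegral.integral_of_le (by positivity : (0:ℝ) ≤ 2 * Real.pi),
              Complex.ofReal_mul]
        _ = ((1 / (2 * Real.pi) : ℝ) : ℂ) *
            ∫ θ, (f (pairRot x i j θ) : ℂ) ∂(volume.restrict (Set.Ioc (0:ℝ) (2 * Real.pi))) := by
            congr 1
            exact integral_ofReal.symm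
    calc fourierT (RS1 i j f) ζ
        = ∫ x : Fin M → ℝ, eKer (∑ l, ζ l * x l) *
            (((1 / (2 * Real.pi) : ℝ) : ℂ) * ∫ θ, (f (pairRot x i j θ) : ℂ) ∂(volume.restrict (Set.Ioc (0:ℝ) (2 * Real.pi)))) := by
          rw [fourierT_eq]
          exact integral_congr_ae (Eventually.of_forall fun x => by simp only [h1])
      _ = ((1 / (2 * Real.pi) : ℝ) : ℂ) * ∫ x : Fin M → ℝ, ∫ θ, F θ x ∂(volume.restrict (Set.Ioc (0:ℝ) (2 * Real.pi))) := by
          rw [← integral_const_mul]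
          refine integral_congr_ae (Eventually.of_forall fun x => ?_)
          simp only [hF]
          rw [mul_left_comm, ← integral_const_mul]
      _ = ((1 / (2 * Real.pi) : ℝ) : ℂ) * ∫ θ, (∫ x, F θ x) ∂(volume.restrict (Set.Ioc (0:ℝ) (2 * Real.pi))) := by
          rw [← integral_integral_swap hFint]
      _ = ((1 / (2 * Real.pi) : ℝ) : ℂ) *
            ∫ θ in Set.Ioc 0 (2 * Real.pi), fourierT f (pairRot ζ i j θ) := by
          congr 1
          exact integral_congr_ae (Eventually.of_forall fun θ => hslice θ)
  · have := hFint.integral_prod_left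
    exact this.congr (Eventually.of_forall fun θ => hslice θ)

end Aux2

section Aux3

variable {M : ℕ}

lemma exp_taylor_bound (r : ℝ) :
    ‖Complex.exp ((r : ℂ) * Complex.I) - 1 - (r : ℂ) * Complex.I‖ ≤ 3 * r ^ 2 := by
  rcases le_or_gt |r| 1 with h | h
  · have h1 : ‖(r : ℂ) * Complex.I‖ ≤ 1 := by
      rwa [norm_mul, Complex.norm_I, mul_one, ((Complex.norm_real _).trans (Real.norm_eq_abs _))]
    have h2 := Complex.norm_exp_sub_one_sub_id_le h1
    rw [norm_mul, Complex.norm_I, mul_one, ((Complex.norm_real _).trans (Real.norm_eq_abs _))] at h2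
    nlinarith [sq_abs r, sq_nonneg r]
  · have h2 : ‖Complex.exp ((r : ℂ) * Complex.I)‖ = 1 :=
      Complex.norm_exp_ofReal_mul_I r
    have h3 : ‖Complex.exp ((r : ℂ) * Complex.I) - 1 - (r : ℂ) * Complex.I‖
        ≤ ‖Complex.exp ((r : ℂ) * Complex.I) - 1‖ + ‖(r : ℂ) * Complex.I‖ :=
      norm_sub_le _ _
    have h4 : ‖Complex.exp ((r : ℂ) * Complex.I) - 1‖
        ≤ ‖Complex.exp ((r : ℂ) * Complex.I)‖ + ‖(1 : ℂ)‖ :=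
      norm_sub_le _ _
    rw [norm_mul, Complex.norm_I, mul_one, ((Complex.norm_real _).trans (Real.norm_eq_abs _))] at h3
    rw [h2, norm_one] at h4
    nlinarith [sq_abs r, abs_nonneg r]

lemma fourier_sub_one_bound {f : (Fin M → ℝ) → ℝ}
    (hf : IsProbDensity f) (hfm : ZeroFirstFiniteSecond f) (ζ : Fin M → ℝ) :
    ‖fourierT f ζ - 1‖ ≤
      (12 * Real.pi ^ 2 * ∑ l, ∫ x : Fin M → ℝ, x l ^ 2 * f x) * ∑ l, ζ l ^ 2 := by
  set t : (Fin M → ℝ) → ℝ := fun x => ∑ l, ζ l * x l with ht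
  set Q : ℝ := ∑ l, ζ l ^ 2 with hQ
  have hQ0 : 0 ≤ Q := Finset.sum_nonneg fun _ _ => sq_nonneg _
  have hCS : ∀ x : Fin M → ℝ, t x ^ 2 ≤ Q * ∑ l, x l ^ 2 := fun x =>
    Finset.sum_mul_sq_le_sq_mul_sq Finset.univ ζ x
  -- the remainder function
  set E : (Fin M → ℝ) → ℂ := fun x =>
    Complex.exp (((-2 * Real.pi * t x : ℝ) : ℂ) * Complex.I) - 1 -
      ((-2 * Real.pi * t x : ℝ) : ℂ) * Complex.I with hE
  have hEbound : ∀ x : Fin M → ℝ, ‖E x‖ ≤ 12 * Real.pi ^ 2 * Q * ∑ l, x l ^ 2 := by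
    intro x
    have := exp_taylor_bound (-2 * Real.pi * t x)
    have h5 := mul_le_mul_of_nonneg_left (hCS x) (by positivity : (0:ℝ) ≤ 12 * Real.pi ^ 2)
    have h2 : 3 * (-2 * Real.pi * t x) ^ 2 ≤ 12 * Real.pi ^ 2 * Q * ∑ l, x l ^ 2 := by
      calc 3 * (-2 * Real.pi * t x) ^ 2 = 12 * Real.pi ^ 2 * t x ^ 2 := by ring
        _ ≤ 12 * Real.pi ^ 2 * (Q * ∑ l, x l ^ 2) := h5
        _ = 12 * Real.pi ^ 2 * Q * ∑ l, x l ^ 2 := by ring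
    exact le_trans this h2
  have hcont : Continuous E := by unfold E t; fun_prop
  -- integrability facts
  have hfi : Integrable f := hf.2.1
  have hsum : Integrable (fun x : Fin M → ℝ => (∑ l, x l ^ 2) * f x) := by
    have : (fun x : Fin M → ℝ => (∑ l, x l ^ 2) * f x)
        = fun x => ∑ l, x l ^ 2 * f x := by
      funext x; rw [Finset.sum_mul]
    rw [this]
    exact integrable_finset_sum _ fun l _ => hfm.2 l
  have hEf : Integrable (fun x => E x * (f x : ℂ)) := by
    refine ((hsum.const_mul (12 * Real.pi ^ 2 * Q)).mono' ?_ ?_)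
    · exact hcont.aestronglyMeasurable.mul
        (Complex.continuous_ofReal.comp_aestronglyMeasurable hfi.aestronglyMeasurable)
    · refine Eventually.of_forall fun x => ?_
      rw [norm_mul, ((Complex.norm_real _).trans (Real.norm_eq_abs _)),
        abs_of_nonneg (hf.1 x)]
      calc ‖E x‖ * f x ≤ (12 * Real.pi ^ 2 * Q * ∑ l, x l ^ 2) * f x :=
            mul_le_mul_of_nonneg_right (hEbound x) (hf.1 x)
        _ = 12 * Real.pi ^ 2 * Q * ((∑ l, x l ^ 2) * f x) := by ring
  have hker : Integrable (fun x => Complex.exp (((-2 * Real.pi * t x : ℝ) : ℂ) * Complex.I)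
      * (f x : ℂ)) := by
    refine (hfi.norm.mono' ?_ ?_)
    · refine AEStronglyMeasurable.mul ?_
        (Complex.continuous_ofReal.comp_aestronglyMeasurable hfi.aestronglyMeasurable)
      exact (Complex.continuous_exp.comp (by unfold t; fun_prop)).aestronglyMeasurable
    · refine Eventually.of_forall fun x => ?_
      rw [norm_mul, Complex.norm_exp_ofReal_mul_I,
        one_mul, ((Complex.norm_real _).trans (Real.norm_eq_abs _))]
      exact (Real.norm_eq_abs (f x)).ge
  have htf : Integrable (fun x => t x * f x) := by
    have : (fun x : Fin M → ℝ => t x * f x) = fun x => ∑ l, ζ l * (x l * f x) := by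
      funext x; rw [ht]; rw [Finset.sum_mul]; exact Finset.sum_congr rfl fun l _ => by ring
    rw [this]
    exact integrable_finset_sum _ fun l _ => (hfm.1 l).1.const_mul (ζ l)
  have htf0 : ∫ x, t x * f x = 0 := by
    have h : (fun x : Fin M → ℝ => t x * f x) = fun x => ∑ l, ζ l * (x l * f x) := by
      funext x; rw [ht]; rw [Finset.sum_mul]; exact Finset.sum_congr rfl fun l _ => by ring
    rw [h, integral_finset_sum _ fun l _ => (hfm.1 l).1.const_mul (ζ l)]
    refine Finset.sum_eq_zero fun l _ => ?_
    rw [integral_const_mul, (hfm.1 l).2, mul_zero]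
  have hlin : Integrable (fun x => ((-2 * Real.pi * t x : ℝ) : ℂ) * Complex.I * (f x : ℂ)) := by
    have heq : (fun x => ((-2 * Real.pi * t x : ℝ) : ℂ) * Complex.I * (f x : ℂ))
        = fun x => ((((-2 * Real.pi) * (t x * f x) : ℝ) : ℂ)) * Complex.I := by
      funext x; push_cast; ring
    rw [heq]
    exact ((htf.const_mul (-2 * Real.pi)).ofReal).mul_const Complex.I
  -- identity: fourierT f ζ - 1 = ∫ E f
  have hid : fourierT f ζ - 1 = ∫ x, E x * (f x : ℂ) := by
    have hker_eq : ∀ x : Fin M → ℝ, Complex.exp (-2 * Real.pi * Complex.I * ((t x : ℝ) : ℂ))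
        = Complex.exp (((-2 * Real.pi * t x : ℝ) : ℂ) * Complex.I) := by
      intro x; congr 1; push_cast; ring
    have hsplit : ∀ x : Fin M → ℝ, E x * (f x : ℂ)
        = Complex.exp (((-2 * Real.pi * t x : ℝ) : ℂ) * Complex.I) * (f x : ℂ)
          - (f x : ℂ) - ((-2 * Real.pi * t x : ℝ) : ℂ) * Complex.I * (f x : ℂ) := by
      intro x; rw [hE]; ring
    have hsub : Integrable (fun x =>
        Complex.exp (((-2 * Real.pi * t x : ℝ) : ℂ) * Complex.I) * (f x : ℂ) - (f x : ℂ)) :=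
      hker.sub hfi.ofReal
    have e1 : ∫ x, ((Complex.exp (((-2 * Real.pi * t x : ℝ) : ℂ) * Complex.I) * (f x : ℂ)
          - (f x : ℂ)) - ((-2 * Real.pi * t x : ℝ) : ℂ) * Complex.I * (f x : ℂ))
        = (∫ x, (Complex.exp (((-2 * Real.pi * t x : ℝ) : ℂ) * Complex.I) * (f x : ℂ)
          - (f x : ℂ))) - ∫ x, ((-2 * Real.pi * t x : ℝ) : ℂ) * Complex.I * (f x : ℂ) :=
      integral_sub hsub hlin
    have e2 : ∫ x, (Complex.exp (((-2 * Real.pi * t x : ℝ) : ℂ) * Complex.I) * (f x : ℂ)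
          - (f x : ℂ))
        = (∫ x, Complex.exp (((-2 * Real.pi * t x : ℝ) : ℂ) * Complex.I) * (f x : ℂ))
          - ∫ x, (f x : ℂ) :=
      integral_sub hker hfi.ofReal
    rw [integral_congr_ae (Eventually.of_forall hsplit), e1, e2]
    have h1 : ∫ x, (f x : ℂ) = 1 := by
      have h : (∫ x, (f x : ℂ)) = ((∫ x, f x : ℝ) : ℂ) := integral_ofReal
      rw [h, hf.2.2, Complex.ofReal_one]
    have h2 : ∫ x, ((-2 * Real.pi * t x : ℝ) : ℂ) * Complex.I * (f x : ℂ) = 0 := by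
      have heq : (fun x => ((-2 * Real.pi * t x : ℝ) : ℂ) * Complex.I * (f x : ℂ))
          = fun x => ((((-2 * Real.pi) * (t x * f x) : ℝ) : ℂ)) * Complex.I := by
        funext x; push_cast; ring
      have hoR : (∫ x, ((((-2 * Real.pi) * (t x * f x) : ℝ)) : ℂ))
          = (((∫ x, (-2 * Real.pi) * (t x * f x) : ℝ)) : ℂ) := integral_ofReal
      rw [heq, integral_mul_const, hoR, integral_const_mul, htf0, mul_zero,
        Complex.ofReal_zero, zero_mul]
    have h3 : fourierT f ζ = ∫ x, Complex.exp (((-2 * Real.pi * t x : ℝ) : ℂ) * Complex.I)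
        * (f x : ℂ) := by
      have hker3 : ∀ y : Fin M → ℝ,
          Complex.exp (-2 * Real.pi * Complex.I * ((∑ l, ζ l * y l : ℝ) : ℂ))
            = Complex.exp (((-2 * Real.pi * t y : ℝ) : ℂ) * Complex.I) := fun y => by
        have hy : (∑ l, ζ l * y l) = t y := rfl
        rw [hy, hker_eq y]
      rw [fourierT]
      exact integral_congr_ae (Eventually.of_forall fun x => by simp only [hker3])
    rw [h1, h2, h3, sub_zero]
  -- final bound
  rw [hid]
  have hnorm := norm_integral_le_integral_norm (μ := (volume : Measure (Fin M → ℝ))) fun x => E x * (f x : ℂ)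
  refine le_trans hnorm ?_
  have hmono : ∫ x, ‖E x * (f x : ℂ)‖ ≤ ∫ x, 12 * Real.pi ^ 2 * Q * ((∑ l, x l ^ 2) * f x) := by
    refine integral_mono hEf.norm (hsum.const_mul _) fun x => ?_
    rw [norm_mul, ((Complex.norm_real _).trans (Real.norm_eq_abs _)),
      abs_of_nonneg (hf.1 x)]
    calc ‖E x‖ * f x ≤ (12 * Real.pi ^ 2 * Q * ∑ l, x l ^ 2) * f x :=
          mul_le_mul_of_nonneg_right (hEbound x) (hf.1 x)
      _ = 12 * Real.pi ^ 2 * Q * ((∑ l, x l ^ 2) * f x) := by ring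
  refine le_trans hmono ?_
  rw [integral_const_mul]
  have hsum_eq : ∫ x : Fin M → ℝ, (∑ l, x l ^ 2) * f x = ∑ l, ∫ x : Fin M → ℝ, x l ^ 2 * f x := by
    have h : (fun x : Fin M → ℝ => (∑ l, x l ^ 2) * f x) = fun x => ∑ l, x l ^ 2 * f x := by
      funext x; rw [Finset.sum_mul]
    rw [h, integral_finset_sum _ fun l _ => hfm.2 l]
  rw [hsum_eq]
  calc 12 * Real.pi ^ 2 * Q * ∑ l, ∫ x : Fin M → ℝ, x l ^ 2 * f x
      = (12 * Real.pi ^ 2 * ∑ l, ∫ x : Fin M → ℝ, x l ^ 2 * f x) * Q := by ring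
    _ ≤ (12 * Real.pi ^ 2 * ∑ l, ∫ x : Fin M → ℝ, x l ^ 2 * f x) * Q := le_rfl

end Aux3

/-- **The Kac collision operator is a contraction in the GTW metric** (eq. (4.11)). -/
theorem d2_RS_contraction (M : ℕ) (hM : 2 ≤ M) (i j : Fin M) (hij : i < j)
    (f g : (Fin M → ℝ) → ℝ)
    (hf : IsProbDensity f) (hg : IsProbDensity g)
    (hfm : ZeroFirstFiniteSecond f) (hgm : ZeroFirstFiniteSecond g) :
    d2 (RS1 i j f) (RS1 i j g) ≤ d2 f g := by
  have hij' : i ≠ j := Fin.ne_of_lt hij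
  haveI hne : Nonempty {ζ : Fin M → ℝ // ζ ≠ 0} := by
    refine ⟨⟨Function.update (0 : Fin M → ℝ) i 1, ?_⟩⟩
    intro h
    have h2 := congrFun h i
    simp [Function.update_self] at h2
  set Kf := 12 * Real.pi ^ 2 * ∑ l, ∫ x : Fin M → ℝ, x l ^ 2 * f x with hKf
  set Kg := 12 * Real.pi ^ 2 * ∑ l, ∫ x : Fin M → ℝ, x l ^ 2 * g x with hKg
  have hbdd : BddAbove (Set.range fun ζ : {ζ : Fin M → ℝ // ζ ≠ 0} =>
      ‖fourierT f ζ.1 - fourierT g ζ.1‖ / (∑ l, (ζ.1 l) ^ 2)) := by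
    refine ⟨Kf + Kg, ?_⟩
    rintro r ⟨ζ, rfl⟩
    have hQ : 0 < ∑ l, (ζ.1 l) ^ 2 := sum_sq_pos ζ.2
    rw [div_le_iff₀ hQ]
    have h1 := fourier_sub_one_bound hf hfm ζ.1
    have h2 := fourier_sub_one_bound hg hgm ζ.1
    have h3 : ‖fourierT f ζ.1 - fourierT g ζ.1‖
        ≤ ‖fourierT f ζ.1 - 1‖ + ‖fourierT g ζ.1 - 1‖ := by
      have heq : fourierT f ζ.1 - fourierT g ζ.1
          = (fourierT f ζ.1 - 1) - (fourierT g ζ.1 - 1) := by ring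
      rw [heq]; exact norm_sub_le _ _
    calc ‖fourierT f ζ.1 - fourierT g ζ.1‖
        ≤ ‖fourierT f ζ.1 - 1‖ + ‖fourierT g ζ.1 - 1‖ := h3
      _ ≤ Kf * (∑ l, ζ.1 l ^ 2) + Kg * (∑ l, ζ.1 l ^ 2) := add_le_add h1 h2
      _ = (Kf + Kg) * ∑ l, ζ.1 l ^ 2 := by ring
  have hpoint : ∀ ξ : Fin M → ℝ, ξ ≠ 0 →
      ‖fourierT f ξ - fourierT g ξ‖ ≤ d2 f g * ∑ l, ξ l ^ 2 := by
    intro ξ hξ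
    have hQ : 0 < ∑ l, ξ l ^ 2 := sum_sq_pos hξ
    have h' : ‖fourierT f ξ - fourierT g ξ‖ / (∑ l, ξ l ^ 2) ≤ d2 f g :=
      le_ciSup hbdd (⟨ξ, hξ⟩ : {ζ : Fin M → ℝ // ζ ≠ 0})
    calc ‖fourierT f ξ - fourierT g ξ‖
        = ‖fourierT f ξ - fourierT g ξ‖ / (∑ l, ξ l ^ 2) * ∑ l, ξ l ^ 2 :=
          (div_mul_cancel₀ _ hQ.ne').symm
      _ ≤ d2 f g * ∑ l, ξ l ^ 2 := mul_le_mul_of_nonneg_right h' hQ.le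
  have hgoal : ∀ ζp : {ζ : Fin M → ℝ // ζ ≠ 0},
      ‖fourierT (RS1 i j f) ζp.1 - fourierT (RS1 i j g) ζp.1‖
        / (∑ l, (ζp.1 l) ^ 2) ≤ d2 f g := by
    rintro ⟨ζ, hζ⟩
    have hQ : 0 < ∑ l, ζ l ^ 2 := sum_sq_pos hζ
    rw [div_le_iff₀ hQ]
    obtain ⟨hfid, hfint⟩ := RS_fourier hij' hf.2.1 ζ
    obtain ⟨hgid, hgint⟩ := RS_fourier hij' hg.2.1 ζ
    have hdiff : fourierT (RS1 i j f) ζ - fourierT (RS1 i j g) ζ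
        = ((1 / (2 * Real.pi) : ℝ) : ℂ) * ∫ θ in Set.Ioc 0 (2 * Real.pi),
            (fourierT f (pairRot ζ i j θ) - fourierT g (pairRot ζ i j θ)) := by
      rw [hfid, hgid, ← mul_sub, ← integral_sub hfint hgint]
    rw [hdiff, norm_mul, ((Complex.norm_real _).trans (Real.norm_eq_abs _)), abs_of_pos (by positivity : (0:ℝ) < 1 / (2 * Real.pi))]
    have hIbound : ‖∫ θ in Set.Ioc 0 (2 * Real.pi),
          (fourierT f (pairRot ζ i j θ) - fourierT g (pairRot ζ i j θ))‖
        ≤ (d2 f g * ∑ l, ζ l ^ 2) * (2 * Real.pi) := by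
      have hfin : volume (Set.Ioc (0:ℝ) (2 * Real.pi)) < ⊤ := by
        rw [Real.volume_Ioc]; exact ENNReal.ofReal_lt_top
      have hC : ∀ θ ∈ Set.Ioc (0:ℝ) (2 * Real.pi),
          ‖fourierT f (pairRot ζ i j θ) - fourierT g (pairRot ζ i j θ)‖
            ≤ d2 f g * ∑ l, ζ l ^ 2 := by
        intro θ _
        have h := hpoint (pairRot ζ i j θ) (pairRot_ne_zero hij' hζ θ)
        rwa [sum_sq_pairRot hij'] at h
      have hb := norm_setIntegral_le_of_norm_le_const hfin hC
      have hvol : (volume (Set.Ioc (0:ℝ) (2 * Real.pi))).toReal = 2 * Real.pi := by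
        rw [Real.volume_Ioc, ENNReal.toReal_ofReal (by nlinarith [Real.pi_pos] : (0:ℝ) ≤ 2 * Real.pi - 0)]
        ring
      rw [measureReal_def, hvol] at hb
      exact hb
    calc 1 / (2 * Real.pi) * ‖∫ θ in Set.Ioc 0 (2 * Real.pi),
          (fourierT f (pairRot ζ i j θ) - fourierT g (pairRot ζ i j θ))‖
        ≤ 1 / (2 * Real.pi) * ((d2 f g * ∑ l, ζ l ^ 2) * (2 * Real.pi)) :=
          mul_le_mul_of_nonneg_left hIbound (by positivity)
      _ = d2 f g * ∑ l, ζ l ^ 2 := by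
          field_simp
  exact ciSup_le hgoal
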